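/- Let (G,·,e,⊙) be a left group-e-semigroup and suppose e⊙e is central in (G,⊙), i.e. (e⊙e)⊙x = x⊙(e⊙e) for all x ∈ G. Then e⊙G is the least ideal of (G,⊙): e⊙G is an ideal and e⊙G ⊆ I for every ideal I of (G,⊙); and e⊙G is the largest subgroup of (G,⊙) containing e⊙e: e⊙G is a subgroup of (G,⊙) containing e⊙e, and every subset H ⊆ G that is closed under ⊙, forms a group under ⊙, and contains e⊙e satisfies H ⊆ e⊙G. -/
import Mathlib


/-- A subset `I` is an ideal of the semigroup `(G, op)`. -/
def IsMagmaIdeal {G : Type*} (op : G → G → G) (I : Set G) : Prop :=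
  ∀ x : G, ∀ i ∈ I, op x i ∈ I ∧ op i x ∈ I

/-- A subset `H` is a subgroup of the semigroup `(G, op)`: it is closed under `op`
and forms a group under `op`. -/
def IsSubgroupUnder {G : Type*} (op : G → G → G) (H : Set G) : Prop :=
  (∀ a ∈ H, ∀ b ∈ H, op a b ∈ H) ∧
  ∃ ι ∈ H, (∀ a ∈ H, op ι a = a ∧ op a ι = a) ∧
    ∀ a ∈ H, ∃ b ∈ H, op a b = ι ∧ op b a = ι

/-- In a left group-`e`-semigroup `(G, ·, e, ⊙)` (group identity `e = 1`)
in which `e ⊙ e` is central in `(G, ⊙)`, the set `e ⊙ G` is the least (nonempty) ideal of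
`(G, ⊙)` and the largest subgroup of `(G, ⊙)` containing `e ⊙ e`. -/
theorem stmt_3 {G : Type*} [Group G] (op : G → G → G)
    (hassoc : ∀ x y z : G, op (op x y) z = op x (op y z))
    (hjoin : ∀ x y : G, op 1 (x * y) = op 1 (op x y))
    (hcentral : ∀ x : G, op (op 1 1) x = op x (op 1 1)) :
    (IsMagmaIdeal op (Set.range (op 1)) ∧
      ∀ I : Set G, I.Nonempty → IsMagmaIdeal op I → Set.range (op 1) ⊆ I) ∧
    (IsSubgroupUnder op (Set.range (op 1)) ∧ op 1 1 ∈ Set.range (op 1) ∧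
      ∀ H : Set G, IsSubgroupUnder op H → op 1 1 ∈ H → H ⊆ Set.range (op 1)) := by
  -- key: op 1 x = op (op 1 1) x
  have hf : ∀ x : G, op 1 x = op (op 1 1) x := by
    intro x
    have h1 := hjoin 1 x
    rw [one_mul] at h1
    rw [h1, ← hassoc]
  have hmul : ∀ x y : G, op (op 1 x) y = op 1 (x * y) := by
    intro x y; rw [hassoc, ← hjoin]
  have hff : ∀ x : G, op 1 (op 1 x) = op 1 x := by
    intro x; rw [← hassoc, ← hf]
  have hopf : ∀ x y : G, op (op 1 x) (op 1 y) = op 1 (x * y) := by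
    intro x y
    calc op (op 1 x) (op 1 y) = op (op 1 x) (op (op 1 1) y) := by rw [← hf]
      _ = op (op (op 1 x) (op 1 1)) y := (hassoc _ _ _).symm
      _ = op (op (op 1 1) (op 1 x)) y := by rw [hcentral (op 1 x)]
      _ = op (op 1 (op 1 x)) y := by rw [hf (op 1 x)]
      _ = op (op 1 x) y := by rw [hff]
      _ = op 1 (x * y) := hmul x y
  refine ⟨⟨?_, ?_⟩, ⟨?_, ⟨1, rfl⟩, ?_⟩⟩
  · -- ideal
    rintro x i ⟨a, rfl⟩
    constructor
    · refine ⟨op x a, ?_⟩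
      calc op 1 (op x a) = op (op 1 1) (op x a) := hf _
        _ = op (op (op 1 1) x) a := (hassoc _ _ _).symm
        _ = op (op x (op 1 1)) a := by rw [hcentral x]
        _ = op x (op (op 1 1) a) := hassoc _ _ _
        _ = op x (op 1 a) := by rw [hf a]
    · exact ⟨a * x, (hmul a x).symm ▸ rfl⟩
  · -- least ideal
    rintro I ⟨i, hi⟩ hI y ⟨x, rfl⟩
    have h := (hI (op 1 (x * i⁻¹)) i hi).1
    have : op (op 1 (x * i⁻¹)) i = op 1 x := by
      rw [hmul, mul_assoc, inv_mul_cancel, mul_one]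
    rwa [this] at h
  · -- subgroup
    refine ⟨?_, op 1 1, ⟨1, rfl⟩, ?_, ?_⟩
    · rintro a ⟨x, rfl⟩ b ⟨y, rfl⟩
      exact ⟨x * y, (hopf x y).symm⟩
    · rintro a ⟨x, rfl⟩
      constructor
      · rw [← hf, hff]
      · rw [← hcentral, ← hf, hff]
    · rintro a ⟨x, rfl⟩
      refine ⟨op 1 x⁻¹, ⟨x⁻¹, rfl⟩, ?_, ?_⟩
      · rw [hopf, mul_inv_cancel]
      · rw [hopf, inv_mul_cancel]
  · -- largest subgroup containing op 1 1
    rintro H ⟨hclosed, ι, hιH, hid, hinv⟩ hcH a haH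
    obtain ⟨b, hbH, hbc1, hbc2⟩ := hinv _ hcH
    refine ⟨op b a, ?_⟩
    calc op 1 (op b a) = op (op 1 1) (op b a) := hf _
      _ = op (op (op 1 1) b) a := (hassoc _ _ _).symm
      _ = op ι a := by rw [hbc1]
      _ = a := (hid a haH).1
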